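/- Let N ∈ ℕ, W ∈ (0, 1/2), R ≤ N − 2⌊NW⌋ − 1, and let V ∈ ℂ^{(N−2⌊NW⌋−1)×R} have orthonormal columns. Let π₀ ≥ π₁ ≥ ⋯ ≥ π_{N−2⌊NW⌋−2} denote the singular values of F̄_{N,W}* B_{N,W} − V V* F̄_{N,W}* B_{N,W}. Then for Q = [F_{N,W} F̄_{N,W} V], ∫_{−W}^{W} ‖e_f − QQ*e_f‖₂² df ≤ Σ_{l=0}^{N−2⌊NW⌋−2} π_l. -/

import Mathlib

open Matrix MeasureTheory
open scoped Real

noncomputable section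

/-- The prolate matrix `B_{N,W}`. -/
def prolateR (N : ℕ) (W : ℝ) : Matrix (Fin N) (Fin N) ℝ :=
  Matrix.of fun m n : Fin N =>
    if m = n then 2 * W
    else Real.sin (2 * Real.pi * W * (((m : ℕ) : ℝ) - ((n : ℕ) : ℝ))) /
      (Real.pi * (((m : ℕ) : ℝ) - ((n : ℕ) : ℝ)))

def prolateC (N : ℕ) (W : ℝ) : Matrix (Fin N) (Fin N) ℂ :=
  (prolateR N W).map (fun x => (x : ℂ))

/-- sampled complex exponential `e_f`. -/
def eVec (N : ℕ) (f : ℝ) : Fin N → ℂ :=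
  fun n => Complex.exp (2 * (Real.pi : ℂ) * (f : ℂ) * ((n : ℕ) : ℂ) * Complex.I)

/-- partial DFT matrix with columns `(1/√N) e_{k/N}`, `|k| ≤ m`. -/
def Fmat (N m : ℕ) : Matrix (Fin N) (Fin (2 * m + 1)) ℂ :=
  Matrix.of fun n i =>
    ((1 / Real.sqrt N : ℝ) : ℂ) *
      Complex.exp (2 * (Real.pi : ℂ) * Complex.I * ((((i : ℕ) : ℤ) - (m : ℤ) : ℤ) : ℂ) *
        ((n : ℕ) : ℂ) / (N : ℂ))

/-- remaining (high-frequency) DFT columns, frequencies `k/N` with `k = m+1, …, N−m−1`. -/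
def Fbar (N m : ℕ) : Matrix (Fin N) (Fin (N - (2 * m + 1))) ℂ :=
  Matrix.of fun n j =>
    ((1 / Real.sqrt N : ℝ) : ℂ) *
      Complex.exp (2 * (Real.pi : ℂ) * Complex.I * (((j : ℕ) + m + 1 : ℕ) : ℂ) *
        ((n : ℕ) : ℂ) / (N : ℂ))

/-- squared residual `‖e_f − P e_f‖₂²`. -/
def residP {N : ℕ} (P : Matrix (Fin N) (Fin N) ℂ) (f : ℝ) : ℝ :=
  ∑ n, ‖(eVec N f - P.mulVec (eVec N f)) n‖ ^ 2

/-- `IsSVD A σ` : `σ` lists the singular values of `A` in decreasing order. -/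
def IsSVD {M N : ℕ} (A : Matrix (Fin M) (Fin N) ℂ) (σ : Fin M → ℝ) : Prop :=
  (∀ i, 0 ≤ σ i) ∧ (∀ i j : Fin M, i ≤ j → σ j ≤ σ i) ∧
  ∃ U : Matrix (Fin M) (Fin M) ℂ, ∃ V : Matrix (Fin N) (Fin N) ℂ,
    Uᴴ * U = 1 ∧ Vᴴ * V = 1 ∧
    A = U * (Matrix.of fun (i : Fin M) (j : Fin N) =>
      if (i : ℕ) = (j : ℕ) then ((σ i : ℝ) : ℂ) else 0) * Vᴴ

/- ===== auxiliary ===== -/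

lemma two_pi_I_ne : 2 * (Real.pi:ℂ) * Complex.I ≠ 0 := by
  simp [Real.pi_ne_zero, Complex.I_ne_zero, Complex.ofReal_ne_zero]

lemma dvd_small (N : ℕ) (x : ℤ) (h : (N:ℤ) ∣ x) (h2 : |x| < N) : x = 0 := by
  refine Int.eq_zero_of_dvd_of_natAbs_lt_natAbs h ?_
  have hx : (x.natAbs : ℤ) < N := by rwa [Int.abs_eq_natAbs] at h2
  exact_mod_cast hx

lemma sum_exp_int (N : ℕ) (hN : 0 < N) (c : ℤ) :
    ∑ n : Fin N, Complex.exp (2 * (Real.pi:ℂ) * Complex.I * (c:ℂ) * ((n:ℕ):ℂ) / (N:ℂ)) =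
      if ((N:ℤ) ∣ c) then (N : ℂ) else 0 := by
  have hNC : (N:ℂ) ≠ 0 := Nat.cast_ne_zero.mpr hN.ne'
  set z : ℂ := 2 * (Real.pi:ℂ) * Complex.I * (c:ℂ) / (N:ℂ) with hz
  have hterm : ∀ n : Fin N,
      Complex.exp (2 * (Real.pi:ℂ) * Complex.I * (c:ℂ) * ((n:ℕ):ℂ) / (N:ℂ))
        = Complex.exp z ^ (n:ℕ) := by
    intro n
    rw [← Complex.exp_nat_mul]
    congr 1
    rw [hz]; ring
  rw [Finset.sum_congr rfl (fun n _ => hterm n), Fin.sum_univ_eq_sum_range (fun i => Complex.exp z ^ i)]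
  by_cases h : (N:ℤ) ∣ c
  · obtain ⟨t, rfl⟩ := h
    have : z = (t:ℂ) * (2 * (Real.pi:ℂ) * Complex.I) := by
      rw [hz]; push_cast; field_simp
    rw [this, Complex.exp_int_mul_two_pi_mul_I]
    simp
  · have hzN : Complex.exp z ^ N = 1 := by
      rw [← Complex.exp_nat_mul]
      have : (N:ℂ) * z = (c:ℂ) * (2 * (Real.pi:ℂ) * Complex.I) := by
        rw [hz]; field_simp
      rw [this]
      exact_mod_cast Complex.exp_int_mul_two_pi_mul_I c
    have hz1 : Complex.exp z ≠ 1 := by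
      intro he
      obtain ⟨k, hk⟩ := Complex.exp_eq_one_iff.mp he
      apply h
      refine ⟨k, ?_⟩
      have : (c:ℂ) = (N:ℂ) * (k:ℂ) := by
        have h2 : 2 * (Real.pi:ℂ) * Complex.I * (c:ℂ) = (k:ℂ) * (2 * (Real.pi:ℂ) * Complex.I) * (N:ℂ) := by
          rw [hz, div_eq_iff hNC] at hk
          linear_combination hk
        apply mul_left_cancel₀ two_pi_I_ne
        rw [h2]; ring
      exact_mod_cast this
    rw [geom_sum_eq hz1, hzN]
    simp [h]

/-- exponential column with integer frequency -/
def ecol (N : ℕ) (k : ℤ) (n : Fin N) : ℂ :=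
  Complex.exp (2 * (Real.pi:ℂ) * Complex.I * (k:ℂ) * ((n:ℕ):ℂ) / (N:ℂ))

lemma conj_ecol_mul (N : ℕ) (a b : ℤ) (n : Fin N) :
    (starRingEnd ℂ) (ecol N a n) * ecol N b n = ecol N (b - a) n := by
  unfold ecol
  rw [← Complex.exp_conj, ← Complex.exp_add]
  congr 1
  simp only [map_div₀, _root_.map_mul, Complex.conj_I, map_ofNat, Complex.conj_ofReal,
    map_intCast, map_natCast]
  push_cast
  ring

lemma ecol_dot (N : ℕ) (hN : 0 < N) (a b : ℤ) :
    ∑ n : Fin N, (starRingEnd ℂ) (ecol N a n) * ecol N b n =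
      if ((N:ℤ) ∣ (b - a)) then (N : ℂ) else 0 := by
  rw [Finset.sum_congr rfl (fun n _ => conj_ecol_mul N a b n)]
  exact sum_exp_int N hN (b - a)

lemma rs_sq (N : ℕ) (hN : 0 < N) :
    ((1 / Real.sqrt N : ℝ) : ℂ) * ((1 / Real.sqrt N : ℝ) : ℂ) = (N : ℂ)⁻¹ := by
  have h : Real.sqrt N * Real.sqrt N = N := Real.mul_self_sqrt (Nat.cast_nonneg N)
  have hs : Real.sqrt N ≠ 0 := by
    positivity
  rw [← Complex.ofReal_mul]
  rw [div_mul_div_comm, h]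
  norm_num

lemma Fmat_apply (N m : ℕ) (n : Fin N) (i : Fin (2*m+1)) :
    Fmat N m n i = ((1 / Real.sqrt N : ℝ) : ℂ) * ecol N ((i:ℤ) - m) n := rfl

lemma Fbar_apply (N m : ℕ) (n : Fin N) (j : Fin (N - (2*m+1))) :
    Fbar N m n j = ((1 / Real.sqrt N : ℝ) : ℂ) * ecol N ((j:ℤ) + m + 1) n := by
  unfold Fbar ecol
  simp only [Matrix.of_apply]
  norm_cast

lemma dot_scaled (N : ℕ) (hN : 0 < N) (a b : ℤ) :
    ∑ n : Fin N, (starRingEnd ℂ) (((1 / Real.sqrt N : ℝ):ℂ) * ecol N a n) *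
      (((1 / Real.sqrt N : ℝ):ℂ) * ecol N b n) = if ((N:ℤ) ∣ (b - a)) then 1 else 0 := by
  have hNC : (N:ℂ) ≠ 0 := Nat.cast_ne_zero.mpr hN.ne'
  have hterm : ∀ n : Fin N,
      (starRingEnd ℂ) (((1 / Real.sqrt N : ℝ):ℂ) * ecol N a n) *
        (((1 / Real.sqrt N : ℝ):ℂ) * ecol N b n)
      = (N:ℂ)⁻¹ * ((starRingEnd ℂ) (ecol N a n) * ecol N b n) := by
    intro n
    rw [_root_.map_mul, Complex.conj_ofReal, ← rs_sq N hN]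
    ring
  rw [Finset.sum_congr rfl (fun n _ => hterm n), ← Finset.mul_sum, ecol_dot N hN a b]
  by_cases h : (N:ℤ) ∣ (b - a) <;> simp [h, hNC]

lemma FmatH_Fmat (N m : ℕ) (hN : 0 < N) (h2 : 2*m+1 ≤ N) :
    (Fmat N m)ᴴ * Fmat N m = 1 := by
  ext i i'
  simp only [Matrix.mul_apply, Matrix.conjTranspose_apply, RCLike.star_def, Fmat_apply]
  rw [dot_scaled N hN (((i:ℕ):ℤ) - m) (((i':ℕ):ℤ) - m)]
  have hd : (((i':ℕ):ℤ) - m) - (((i:ℕ):ℤ) - m) = ((i':ℕ):ℤ) - ((i:ℕ):ℤ) := by ring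
  rw [hd, Matrix.one_apply]
  by_cases h : i = i'
  · subst h; simp
  · rw [if_neg, if_neg h]
    intro hdvd
    have hi := i.isLt
    have hi' := i'.isLt
    have h0 := dvd_small N _ hdvd (by rw [abs_lt]; omega)
    exact h (Fin.ext (by omega))

lemma FbarH_Fbar (N m : ℕ) (hN : 0 < N) (h2 : 2*m+1 ≤ N) :
    (Fbar N m)ᴴ * Fbar N m = 1 := by
  ext j j'
  simp only [Matrix.mul_apply, Matrix.conjTranspose_apply, RCLike.star_def, Fbar_apply]
  rw [dot_scaled N hN (((j:ℕ):ℤ) + m + 1) (((j':ℕ):ℤ) + m + 1)]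
  have hd : ((((j':ℕ):ℤ) + m + 1) - ((((j:ℕ):ℤ) + m + 1))) = ((j':ℕ):ℤ) - ((j:ℕ):ℤ) := by ring
  rw [hd, Matrix.one_apply]
  by_cases h : j = j'
  · subst h; simp
  · rw [if_neg, if_neg h]
    intro hdvd
    have hj := j.isLt
    have hj' := j'.isLt
    have h0 := dvd_small N _ hdvd (by rw [abs_lt]; omega)
    exact h (Fin.ext (by omega))

lemma FmatH_Fbar (N m : ℕ) (hN : 0 < N) (h2 : 2*m+1 ≤ N) :
    (Fmat N m)ᴴ * Fbar N m = 0 := by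
  ext i j
  simp only [Matrix.mul_apply, Matrix.conjTranspose_apply, RCLike.star_def, Fmat_apply, Fbar_apply,
    Matrix.zero_apply]
  rw [dot_scaled N hN (((i:ℕ):ℤ) - m) (((j:ℕ):ℤ) + m + 1)]
  rw [if_neg]
  intro hdvd
  have hi := i.isLt
  have hj := j.isLt
  have h0 := dvd_small N _ hdvd (by rw [abs_lt]; omega)
  omega

lemma ecol_mul_conj (N : ℕ) (k : ℤ) (n n' : Fin N) :
    ecol N k n * (starRingEnd ℂ) (ecol N k n') =
      Complex.exp (2 * (Real.pi:ℂ) * Complex.I * (((((n:ℕ):ℤ) - ((n':ℕ):ℤ)) * k : ℤ):ℂ) / (N:ℂ)) := by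
  unfold ecol
  rw [← Complex.exp_conj, ← Complex.exp_add]
  congr 1
  simp only [map_div₀, _root_.map_mul, Complex.conj_I, map_ofNat, Complex.conj_ofReal,
    map_intCast, map_natCast]
  push_cast
  ring

lemma sum_split (N m K : ℕ) (h2 : 2*m+1 ≤ N) (hK : K = N - (2*m+1)) (g : ℤ → ℂ) :
    ((∑ i : Fin (2*m+1), g (((i:ℕ):ℤ) - m)) + ∑ j : Fin K, g (((j:ℕ):ℤ) + m + 1))
      = ∑ t ∈ Finset.range N, g ((t:ℤ) - m) := by
  rw [Fin.sum_univ_eq_sum_range (fun i => g ((i:ℤ) - m)),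
      Fin.sum_univ_eq_sum_range (fun j => g ((j:ℤ) + m + 1)),
      ← Finset.sum_range_add_sum_Ico _ h2]
  congr 1
  rw [Finset.sum_Ico_eq_sum_range]
  subst hK
  apply Finset.sum_congr rfl
  intro j _
  congr 1
  push_cast
  ring

lemma complete (N m : ℕ) (hN : 0 < N) (h2 : 2*m+1 ≤ N) :
    Fmat N m * (Fmat N m)ᴴ + Fbar N m * (Fbar N m)ᴴ = 1 := by
  have hNC : (N:ℂ) ≠ 0 := Nat.cast_ne_zero.mpr hN.ne'
  ext n n'
  set d : ℤ := ((n:ℕ):ℤ) - ((n':ℕ):ℤ) with hdd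
  set g : ℤ → ℂ := fun k =>
    (N:ℂ)⁻¹ * Complex.exp (2 * (Real.pi:ℂ) * Complex.I * ((d * k : ℤ):ℂ) / (N:ℂ)) with hg
  have hterm : ∀ (k : ℤ),
      (((1 / Real.sqrt N : ℝ):ℂ) * ecol N k n) *
        (starRingEnd ℂ) (((1 / Real.sqrt N : ℝ):ℂ) * ecol N k n') = g k := by
    intro k
    rw [_root_.map_mul, Complex.conj_ofReal, hg]
    simp only []
    rw [← ecol_mul_conj N k n n', ← rs_sq N hN]
    ring
  simp only [Matrix.add_apply, Matrix.mul_apply, Matrix.conjTranspose_apply, RCLike.star_def,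
    Fmat_apply, Fbar_apply]
  rw [Finset.sum_congr rfl (fun (i : Fin (2*m+1)) _ => hterm (((i:ℕ):ℤ) - m)),
      Finset.sum_congr rfl (fun (j : Fin (N - (2*m+1))) _ => hterm (((j:ℕ):ℤ) + m + 1)),
      sum_split N m _ h2 rfl g]
  have hsplit : ∀ t ∈ Finset.range N, g ((t:ℤ) - m) =
      (N:ℂ)⁻¹ * Complex.exp (2 * (Real.pi:ℂ) * Complex.I * (((-(d * m)) : ℤ):ℂ) / (N:ℂ)) *
        Complex.exp (2 * (Real.pi:ℂ) * Complex.I * (d:ℂ) * ((t:ℕ):ℂ) / (N:ℂ)) := by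
    intro t _
    rw [hg]
    simp only []
    have he : Complex.exp (2 * (Real.pi:ℂ) * Complex.I * ((d * ((t:ℤ) - m) : ℤ):ℂ) / (N:ℂ))
        = Complex.exp (2 * (Real.pi:ℂ) * Complex.I * (((-(d * m)) : ℤ):ℂ) / (N:ℂ)) *
          Complex.exp (2 * (Real.pi:ℂ) * Complex.I * (d:ℂ) * ((t:ℕ):ℂ) / (N:ℂ)) := by
      rw [← Complex.exp_add]
      congr 1
      push_cast
      ring
    rw [he]
    ring
  rw [Finset.sum_congr rfl hsplit, ← Finset.mul_sum]
  have hsum : ∑ t ∈ Finset.range N,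
      Complex.exp (2 * (Real.pi:ℂ) * Complex.I * (d:ℂ) * ((t:ℕ):ℂ) / (N:ℂ))
      = if ((N:ℤ) ∣ d) then (N:ℂ) else 0 := by
    rw [← Fin.sum_univ_eq_sum_range (fun t =>
      Complex.exp (2 * (Real.pi:ℂ) * Complex.I * (d:ℂ) * ((t:ℕ):ℂ) / (N:ℂ)))]
    exact sum_exp_int N hN d
  rw [hsum, Matrix.one_apply]
  by_cases h : n = n'
  · have hd0 : d = 0 := by rw [hdd, h]; ring
    simp [h, hd0, hNC]
  · rw [if_neg, if_neg h]
    · ring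
    · intro hdvd
      have hn := n.isLt
      have hn' := n'.isLt
      have h0 := dvd_small N _ hdvd (by rw [abs_lt]; omega)
      exact h (Fin.ext (by omega))

lemma col_norm_one {n k : ℕ} (Wm : Matrix (Fin n) (Fin k) ℂ) (hW : Wmᴴ * Wm = 1) (p : Fin k) :
    ‖(WithLp.equiv 2 (Fin n → ℂ)).symm (fun x => Wm x p)‖ = 1 := by
  set w : EuclideanSpace ℂ (Fin n) := (WithLp.equiv 2 (Fin n → ℂ)).symm (fun x => Wm x p)
  have h1 : (inner ℂ w w) = 1 := by
    rw [PiLp.inner_apply]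
    have : (Wmᴴ * Wm) p p = 1 := by rw [hW, Matrix.one_apply_eq]
    rw [Matrix.mul_apply] at this
    simpa [Matrix.conjTranspose_apply, RCLike.star_def, w, Complex.conj_mul'] using this
  have h3 : ‖w‖ ^ 2 = 1 := by
    rw [← inner_self_eq_norm_sq (𝕜 := ℂ), h1]
    simp
  nlinarith [norm_nonneg w]

lemma entry_bound {n k k' : ℕ} (Wm : Matrix (Fin n) (Fin k) ℂ) (Y : Matrix (Fin n) (Fin k') ℂ)
    (hW : Wmᴴ * Wm = 1) (hY : Yᴴ * Y = 1) (p : Fin k) (q : Fin k') :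
    ‖(Wmᴴ * Y) p q‖ ≤ 1 := by
  set w : EuclideanSpace ℂ (Fin n) := (WithLp.equiv 2 (Fin n → ℂ)).symm (fun x => Wm x p)
  set y : EuclideanSpace ℂ (Fin n) := (WithLp.equiv 2 (Fin n → ℂ)).symm (fun x => Y x q)
  have he : (Wmᴴ * Y) p q = (inner ℂ w y) := by
    rw [PiLp.inner_apply, Matrix.mul_apply]
    simp [Matrix.conjTranspose_apply, RCLike.star_def, w, y]
    exact Finset.sum_congr rfl (fun _ _ => mul_comm _ _)
  rw [he]
  calc ‖(inner ℂ w y)‖ ≤ ‖w‖ * ‖y‖ := norm_inner_le_norm (𝕜 := ℂ) w y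
    _ = 1 := by rw [col_norm_one Wm hW p, col_norm_one Y hY q]; ring

lemma svd_trace_bound {K N : ℕ} (hKN : K ≤ N) (A : Matrix (Fin K) (Fin N) ℂ)
    (σ : Fin K → ℝ) (h : IsSVD A σ) (X : Matrix (Fin N) (Fin K) ℂ) (hX : Xᴴ * X = 1) :
    (Matrix.trace (A * X)).re ≤ ∑ l, σ l := by
  obtain ⟨hpos, -, U, Wm, hU, hW, hA⟩ := h
  set D : Matrix (Fin K) (Fin N) ℂ := Matrix.of fun (i : Fin K) (j : Fin N) =>
    if (i : ℕ) = (j : ℕ) then ((σ i : ℝ) : ℂ) else 0 with hD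
  set C : Matrix (Fin N) (Fin K) ℂ := Wmᴴ * (X * U) with hC
  have hXU : (X * U)ᴴ * (X * U) = 1 := by
    rw [Matrix.conjTranspose_mul, Matrix.mul_assoc, ← Matrix.mul_assoc Xᴴ X U, hX,
      Matrix.one_mul, hU]
  have hCb : ∀ p q, ‖C p q‖ ≤ 1 := fun p q => entry_bound Wm (X * U) hW hXU p q
  have htr : Matrix.trace (A * X) = Matrix.trace (D * C) := by
    rw [hA, hC]
    calc ((U * D * Wmᴴ) * X).trace = ((U * D) * (Wmᴴ * X)).trace := by rw [Matrix.mul_assoc (U*D) Wmᴴ X]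
      _ = ((Wmᴴ * X) * (U * D)).trace := Matrix.trace_mul_comm _ _
      _ = (((Wmᴴ * X) * U) * D).trace := by rw [← Matrix.mul_assoc (Wmᴴ * X) U D]
      _ = (D * ((Wmᴴ * X) * U)).trace := Matrix.trace_mul_comm _ _
      _ = (D * (Wmᴴ * (X * U))).trace := by rw [Matrix.mul_assoc Wmᴴ X U]
  rw [htr]
  have hdiag : ∀ p : Fin K, (D * C) p p = (σ p : ℂ) * C (Fin.castLE hKN p) p := by
    intro p
    rw [Matrix.mul_apply]
    rw [Finset.sum_eq_single (Fin.castLE hKN p)]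
    · simp [hD]
    · intro x _ hx
      rw [hD]
      simp only [Matrix.of_apply]
      rw [if_neg, zero_mul]
      intro hc
      exact hx (by ext; simp [← hc])
    · intro hx
      exact absurd (Finset.mem_univ _) hx
  unfold Matrix.trace Matrix.diag
  rw [Complex.re_sum]
  apply Finset.sum_le_sum
  intro p _
  rw [hdiag p, Complex.re_ofReal_mul]
  calc σ p * (C (Fin.castLE hKN p) p).re ≤ σ p * 1 := by
        apply mul_le_mul_of_nonneg_left _ (hpos p)
        exact le_trans (Complex.re_le_norm _) (hCb _ _)
      _ = σ p := mul_one _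

lemma eVec_conj_mul (N : ℕ) (f : ℝ) (a b : Fin N) :
    (starRingEnd ℂ) (eVec N f a) * eVec N f b =
      Complex.exp ((2 * (Real.pi:ℂ) * ((((b:ℕ):ℝ) - ((a:ℕ):ℝ) : ℝ):ℂ) * Complex.I) * ((f:ℝ):ℂ)) := by
  unfold eVec
  rw [← Complex.exp_conj, ← Complex.exp_add]
  congr 1
  simp only [_root_.map_mul, Complex.conj_I, map_ofNat, Complex.conj_ofReal, map_natCast]
  push_cast
  ring

lemma eVec_conj_mul_continuous (N : ℕ) (a b : Fin N) :
    Continuous fun f : ℝ => (starRingEnd ℂ) (eVec N f a) * eVec N f b := by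
  have : (fun f : ℝ => (starRingEnd ℂ) (eVec N f a) * eVec N f b)
      = fun f : ℝ => Complex.exp ((2 * (Real.pi:ℂ) * ((((b:ℕ):ℝ) - ((a:ℕ):ℝ) : ℝ):ℂ) * Complex.I) * ((f:ℝ):ℂ)) := by
    funext f; exact eVec_conj_mul N f a b
  rw [this]
  exact Complex.continuous_exp.comp (continuous_const.mul Complex.continuous_ofReal)

lemma integral_eVec (N : ℕ) (W : ℝ) (hW0 : 0 < W) (a b : Fin N) :
    ∫ f in (-W)..W, (starRingEnd ℂ) (eVec N f a) * eVec N f b = ((prolateR N W b a : ℝ) : ℂ) := by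
  rw [intervalIntegral.integral_congr (g := fun f : ℝ => Complex.exp
      ((2 * (Real.pi:ℂ) * ((((b:ℕ):ℝ) - ((a:ℕ):ℝ) : ℝ):ℂ) * Complex.I) * ((f:ℝ):ℂ)))
      (fun f _ => eVec_conj_mul N f a b)]
  set d : ℝ := ((b:ℕ):ℝ) - ((a:ℕ):ℝ) with hd
  by_cases hab : b = a
  · have hd0 : d = 0 := by rw [hd, hab]; ring
    have : prolateR N W b a = 2 * W := by unfold prolateR; simp [hab]
    rw [this, hd0]
    simp only [Complex.ofReal_zero, mul_zero, zero_mul, Complex.exp_zero,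
      intervalIntegral.integral_const, sub_neg_eq_add, Complex.real_smul, mul_one]
    push_cast
    ring
  · have hdne : d ≠ 0 := by
      rw [hd]
      intro hc
      exact hab (Fin.ext (by exact_mod_cast sub_eq_zero.mp hc))
    have hc : (2 * (Real.pi:ℂ) * ((d:ℝ):ℂ) * Complex.I) ≠ 0 := by
      simp [Real.pi_ne_zero, Complex.I_ne_zero, Complex.ofReal_ne_zero, hdne]
    rw [integral_exp_mul_complex hc]
    have : prolateR N W b a = Real.sin (2 * Real.pi * W * d) / (Real.pi * d) := by
      unfold prolateR; simp [hab, hd]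
    rw [this]
    set θ : ℝ := 2 * Real.pi * W * d with hθ
    have e1 : (2 * (Real.pi:ℂ) * ((d:ℝ):ℂ) * Complex.I) * ((W:ℝ):ℂ) = ((θ:ℝ):ℂ) * Complex.I := by
      rw [hθ]; push_cast; ring
    have e2 : (2 * (Real.pi:ℂ) * ((d:ℝ):ℂ) * Complex.I) * ((-W:ℝ):ℂ) = -((θ:ℝ):ℂ) * Complex.I := by
      rw [hθ]; push_cast; ring
    rw [e1, e2]
    have hsin : ((Real.sin θ : ℝ) : ℂ) = Complex.sin ((θ:ℝ):ℂ) := Complex.ofReal_sin θ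
    have hsindef : Complex.sin ((θ:ℝ):ℂ) =
        (Complex.exp (-((θ:ℝ):ℂ) * Complex.I) - Complex.exp (((θ:ℝ):ℂ) * Complex.I)) * Complex.I / 2 := rfl
    have hπ : (Real.pi:ℂ) ≠ 0 := by simp [Real.pi_ne_zero]
    have hdC : ((d:ℝ):ℂ) ≠ 0 := by simp [hdne]
    push_cast
    rw [hsindef]
    field_simp
    ring_nf
    rw [Complex.I_sq]
    ring

lemma norm_sq_eq (z : ℂ) : ‖z‖^2 = ((starRingEnd ℂ) z * z).re := by
  rw [mul_comm, Complex.mul_conj]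
  simp only [Complex.normSq_eq_norm_sq]
  rw [Complex.ofReal_re]

lemma residP_eq (N : ℕ) (Pm : Matrix (Fin N) (Fin N) ℂ) (f : ℝ) :
    residP Pm f = (∑ a, ∑ b, (((1 - Pm)ᴴ * (1 - Pm) : Matrix (Fin N) (Fin N) ℂ)) a b *
      ((starRingEnd ℂ) (eVec N f a) * eVec N f b)).re := by
  unfold residP
  have hv : eVec N f - Pm.mulVec (eVec N f) = (1 - Pm).mulVec (eVec N f) := by
    rw [Matrix.sub_mulVec, Matrix.one_mulVec]
  rw [hv]
  have h1 : ∀ n : Fin N, ‖((1 - Pm).mulVec (eVec N f)) n‖^2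
      = ((starRingEnd ℂ) (((1 - Pm).mulVec (eVec N f)) n) * ((1 - Pm).mulVec (eVec N f)) n).re :=
    fun n => norm_sq_eq _
  rw [Finset.sum_congr rfl (fun n _ => h1 n), ← Complex.re_sum]
  congr 1
  simp only [Matrix.mulVec, dotProduct, map_sum, _root_.map_mul, Finset.sum_mul,
    Finset.mul_sum, Matrix.mul_apply, Matrix.conjTranspose_apply, RCLike.star_def]
  conv_lhs => rw [Finset.sum_comm]
  conv_rhs => rw [Finset.sum_comm]
  apply Finset.sum_congr rfl; intro a _
  conv_lhs => rw [Finset.sum_comm]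
  apply Finset.sum_congr rfl; intro b _
  apply Finset.sum_congr rfl; intro n _
  ring

lemma integral_residP (N : ℕ) (W : ℝ) (hW0 : 0 < W) (Pm : Matrix (Fin N) (Fin N) ℂ) :
    ∫ f in (-W)..W, residP Pm f =
      (Matrix.trace ((1 - Pm)ᴴ * (1 - Pm) * prolateC N W)).re := by
  set G := (1 - Pm)ᴴ * (1 - Pm) with hG
  have hint : ∀ (a b : Fin N), IntervalIntegrable
      (fun f : ℝ => G a b * ((starRingEnd ℂ) (eVec N f a) * eVec N f b)) volume (-W) W :=
    fun a b => (Continuous.mul continuous_const (eVec_conj_mul_continuous N a b)).intervalIntegrable _ _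
  have step1 : ∫ f in (-W)..W, residP Pm f
      = ∑ a, ∑ b, ∫ f in (-W)..W,
          (G a b * ((starRingEnd ℂ) (eVec N f a) * eVec N f b)).re := by
    rw [intervalIntegral.integral_congr (g := fun f => ∑ a, ∑ b,
        (G a b * ((starRingEnd ℂ) (eVec N f a) * eVec N f b)).re) ?hcg]
    case hcg =>
      intro f _
      rw [residP_eq N Pm f, ← hG, Complex.re_sum]
      exact Finset.sum_congr rfl (fun a _ => (Complex.re_sum _ _))
    rw [intervalIntegral.integral_finset_sum]
    · exact Finset.sum_congr rfl (fun a _ => intervalIntegral.integral_finset_sum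
        (fun b _ => Continuous.intervalIntegrable (by
          exact Complex.continuous_re.comp (Continuous.mul continuous_const (eVec_conj_mul_continuous N a b))) _ _))
    · intro a _
      apply Continuous.intervalIntegrable
      continuity
  rw [step1]
  have step2 : ∀ (a b : Fin N), (∫ f in (-W)..W,
      (G a b * ((starRingEnd ℂ) (eVec N f a) * eVec N f b)).re)
      = (G a b * ((prolateR N W b a : ℝ):ℂ)).re := by
    intro a b
    have := (Complex.reCLM).intervalIntegral_comp_comm (hint a b)
    simp only [Complex.reCLM_apply] at this
    rw [this, intervalIntegral.integral_const_mul, integral_eVec N W hW0 a b]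
  rw [Finset.sum_congr rfl (fun a _ => Finset.sum_congr rfl (fun b _ => step2 a b))]
  have step3 : Matrix.trace (G * prolateC N W) = ∑ a, ∑ b, G a b * ((prolateR N W b a : ℝ):ℂ) := by
    unfold Matrix.trace Matrix.diag
    apply Finset.sum_congr rfl; intro a _
    rw [Matrix.mul_apply]
    rfl
  rw [step3, Complex.re_sum]
  exact Finset.sum_congr rfl (fun a _ => (Complex.re_sum _ _).symm)


/-- with `π_l` the singular values of `F̄* B − V V* F̄* B`,
`∫_{−W}^{W} ‖e_f − QQ*e_f‖₂² df ≤ Σ_l π_l` for `Q = [F  F̄ V]`. -/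
theorem stmt8 (N : ℕ) (W : ℝ) (hW : W ∈ Set.Ioo (0 : ℝ) (1 / 2))
    (m : ℕ) (hm : m = ⌊(N : ℝ) * W⌋₊)
    (R : ℕ) (hR : R ≤ N - (2 * m + 1))
    (V : Matrix (Fin (N - (2 * m + 1))) (Fin R) ℂ) (hV : Vᴴ * V = 1)
    (piv : Fin (N - (2 * m + 1)) → ℝ)
    (hpiv : IsSVD ((Fbar N m)ᴴ * prolateC N W -
      V * Vᴴ * ((Fbar N m)ᴴ * prolateC N W)) piv) :
    (∫ f in (-W)..W,
        residP (Matrix.fromCols (Fmat N m) (Fbar N m * V) *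
          (Matrix.fromCols (Fmat N m) (Fbar N m * V))ᴴ) f)
      ≤ ∑ l, piv l := by
  obtain ⟨hW0, hW2⟩ := hW
  have hsum_nonneg : 0 ≤ ∑ l, piv l := Finset.sum_nonneg (fun l _ => hpiv.1 l)
  by_cases hN0 : N = 0
  · subst hN0
    have : ∀ f : ℝ, residP (Matrix.fromCols (Fmat 0 m) (Fbar 0 m * V) *
        (Matrix.fromCols (Fmat 0 m) (Fbar 0 m * V))ᴴ) f = 0 := by
      intro f
      unfold residP
      exact Finset.sum_of_isEmpty _
    rw [intervalIntegral.integral_congr (fun f _ => this f)]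
    simpa using hsum_nonneg
  have hN : 0 < N := Nat.pos_of_ne_zero hN0
  have hNR : (0:ℝ) < N := by exact_mod_cast hN
  have hmlt : 2 * (m:ℝ) < (N:ℝ) := by
    have h1 : (m:ℝ) ≤ (N:ℝ) * W := by
      rw [hm]; exact Nat.floor_le (by positivity)
    have h2 : (N:ℝ) * W < (N:ℝ) * (1/2) := by
      exact mul_lt_mul_of_pos_left hW2 hNR
    nlinarith
  have h2m : 2*m+1 ≤ N := by
    have : 2*m < N := by exact_mod_cast hmlt
    omega
  set Q := Matrix.fromCols (Fmat N m) (Fbar N m * V) with hQdef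
  set Pm := Q * Qᴴ with hPmdef
  have hbf : (Fbar N m)ᴴ * Fmat N m = 0 := by
    have := congrArg Matrix.conjTranspose (FmatH_Fbar N m hN h2m)
    simpa [Matrix.conjTranspose_mul] using this
  have h12 : (Fmat N m)ᴴ * (Fbar N m * V) = 0 := by
    rw [← Matrix.mul_assoc, FmatH_Fbar N m hN h2m, Matrix.zero_mul]
  have h21 : (Fbar N m * V)ᴴ * Fmat N m = 0 := by
    rw [Matrix.conjTranspose_mul, Matrix.mul_assoc, hbf, Matrix.mul_zero]
  have h22 : (Fbar N m * V)ᴴ * (Fbar N m * V) = 1 := by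
    rw [Matrix.conjTranspose_mul, Matrix.mul_assoc, ← Matrix.mul_assoc (Fbar N m)ᴴ,
      FbarH_Fbar N m hN h2m, Matrix.one_mul, hV]
  have hQ : Qᴴ * Q = 1 := by
    rw [hQdef, Matrix.conjTranspose_fromCols_eq_fromRows_conjTranspose,
        Matrix.fromRows_mul_fromCols, FmatH_Fmat N m hN h2m, h12, h21, h22,
        Matrix.fromBlocks_one]
  have hPP : Pm * Pm = Pm := by
    rw [hPmdef, Matrix.mul_assoc, ← Matrix.mul_assoc Qᴴ, hQ, Matrix.one_mul]
  have hPH : Pmᴴ = Pm := by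
    rw [hPmdef, Matrix.conjTranspose_mul, Matrix.conjTranspose_conjTranspose]
  have hMH : ((1:Matrix (Fin N) (Fin N) ℂ) - Pm)ᴴ = 1 - Pm := by
    rw [Matrix.conjTranspose_sub, Matrix.conjTranspose_one, hPH]
  have hMM : ((1:Matrix (Fin N) (Fin N) ℂ) - Pm) * (1 - Pm) = 1 - Pm := by
    calc ((1:Matrix (Fin N) (Fin N) ℂ) - Pm) * (1 - Pm)
        = 1 - Pm - Pm + Pm * Pm := by noncomm_ring
      _ = 1 - Pm := by rw [hPP]; abel
  have hQQ : Pm = Fmat N m * (Fmat N m)ᴴ + (Fbar N m * V) * (Fbar N m * V)ᴴ := by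
    rw [hPmdef, hQdef, Matrix.conjTranspose_fromCols_eq_fromRows_conjTranspose,
      Matrix.fromCols_mul_fromRows]
  have hMrep : (1:Matrix (Fin N) (Fin N) ℂ) - Pm
      = Fbar N m * ((1 - V*Vᴴ) * (Fbar N m)ᴴ) := by
    rw [hQQ, ← complete N m hN h2m, Matrix.conjTranspose_mul]
    rw [Matrix.sub_mul, Matrix.one_mul, Matrix.mul_sub,
      ← Matrix.mul_assoc (Fbar N m) (V*Vᴴ) (Fbar N m)ᴴ,
      ← Matrix.mul_assoc (Fbar N m) V Vᴴ,
      ← Matrix.mul_assoc (Fbar N m * V) Vᴴ (Fbar N m)ᴴ]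
    abel
  have hAmat : ((1 - V*Vᴴ) * (Fbar N m)ᴴ) * prolateC N W
      = (Fbar N m)ᴴ * prolateC N W - V * Vᴴ * ((Fbar N m)ᴴ * prolateC N W) := by
    rw [Matrix.mul_assoc, Matrix.sub_mul, Matrix.one_mul]
  rw [integral_residP N W hW0 Pm, hMH, hMM, hMrep,
    Matrix.mul_assoc (Fbar N m) ((1 - V*Vᴴ) * (Fbar N m)ᴴ) (prolateC N W),
    Matrix.trace_mul_comm (Fbar N m) (((1 - V*Vᴴ) * (Fbar N m)ᴴ) * prolateC N W),
    hAmat]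
  exact svd_trace_bound (Nat.sub_le N (2*m+1)) _ piv hpiv (Fbar N m) (FbarH_Fbar N m hN h2m)

end
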